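/- arXiv:1708.08164 — 2 statements merged into one kernel-verified Lean document; each statement's English description precedes it below -/
import Mathlib

section
/- Every ideal of ℤ[i] coprime to the ideal (1+i) has a unique generator congruent to 1 modulo (1+i)³. -/
open GaussianInt

private lemma gi_norm (z : GaussianInt) : z.norm = z.re * z.re + z.im * z.im := by
  simp [Zsqrtd.norm]

private lemma gi_one_add_i_dvd (z : GaussianInt) :
    (⟨1, 1⟩ : GaussianInt) ∣ z ↔ (2:ℤ) ∣ z.re + z.im := by
  constructor
  · rintro ⟨w, rfl⟩
    simp only [Zsqrtd.re_mul, Zsqrtd.im_mul]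
    ring_nf
    omega
  · rintro ⟨a, ha⟩
    refine ⟨⟨a, z.im - a⟩, ?_⟩
    ext <;> simp only [Zsqrtd.re_mul, Zsqrtd.im_mul] <;> ring_nf <;> omega

private lemma gi_pow3_dvd (z : GaussianInt) :
    (⟨1, 1⟩ : GaussianInt) ^ 3 ∣ z ↔ (4:ℤ) ∣ z.re + z.im ∧ (4:ℤ) ∣ z.im - z.re := by
  have h3 : (⟨1, 1⟩ : GaussianInt) ^ 3 = ⟨-2, 2⟩ := by
    ext <;> simp [pow_succ, Zsqrtd.re_mul, Zsqrtd.im_mul]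
  rw [h3]
  constructor
  · rintro ⟨w, rfl⟩
    constructor <;> simp only [Zsqrtd.re_mul, Zsqrtd.im_mul] <;> ring_nf <;> omega
  · rintro ⟨⟨a, ha⟩, ⟨b, hb⟩⟩
    refine ⟨⟨b, -a⟩, ?_⟩
    ext <;> simp only [Zsqrtd.re_mul, Zsqrtd.im_mul] <;> ring_nf <;> omega

private lemma gi_prime_one_add_i : Prime (⟨1, 1⟩ : GaussianInt) := by
  have hirr : Irreducible (⟨1, 1⟩ : GaussianInt) := by
    constructor
    · intro hu
      rw [← Zsqrtd.norm_eq_one_iff' (by norm_num)] at hu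
      simp [gi_norm] at hu
    · intro a b hab
      have hn : a.norm * b.norm = 2 := by
        have h2 := congrArg Zsqrtd.norm hab
        rw [Zsqrtd.norm_mul] at h2
        rw [← h2, gi_norm]; norm_num
      have ha0 : 0 ≤ a.norm := Zsqrtd.norm_nonneg (by norm_num) a
      have hane : a.norm ≠ 0 := by
        intro h0
        rw [h0, zero_mul] at hn
        norm_num at hn
      have hdvd : a.norm ∣ 2 := ⟨b.norm, hn.symm⟩
      have hle : a.norm ≤ 2 := Int.le_of_dvd (by norm_num) hdvd
      have h12 : a.norm = 1 ∨ a.norm = 2 := by omega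
      rcases h12 with hh | hh
      · exact Or.inl ((Zsqrtd.norm_eq_one_iff' (by norm_num) a).mp hh)
      · rw [hh] at hn
        have hb1 : b.norm = 1 := by omega
        exact Or.inr ((Zsqrtd.norm_eq_one_iff' (by norm_num) b).mp hb1)
  have hmax := PrincipalIdealRing.isMaximal_of_irreducible hirr
  have hne : (⟨1, 1⟩ : GaussianInt) ≠ 0 := by
    intro h0
    have := congrArg Zsqrtd.re h0
    simp at this
  exact (Ideal.span_singleton_prime hne).mp hmax.isPrime

private lemma gi_unit_eq_one {u : GaussianInt} (hu : IsUnit u)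
    (hdvd : (⟨1, 1⟩ : GaussianInt) ^ 3 ∣ u - 1) : u = 1 := by
  have hn : u.norm = 1 := (Zsqrtd.norm_eq_one_iff' (by norm_num) u).mpr hu
  rw [gi_norm] at hn
  rw [gi_pow3_dvd] at hdvd
  obtain ⟨h1, h2⟩ := hdvd
  have hre : (u - 1).re = u.re - 1 := by simp
  have him : (u - 1).im = u.im := by simp
  rw [hre, him] at h1 h2
  have hb1 : u.re ≤ 1 := by nlinarith [mul_self_nonneg u.im, mul_self_nonneg (u.re - 1)]
  have hb2 : -1 ≤ u.re := by nlinarith [mul_self_nonneg u.im, mul_self_nonneg (u.re + 1)]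
  have hb3 : u.im ≤ 1 := by nlinarith [mul_self_nonneg u.re, mul_self_nonneg (u.im - 1)]
  have hb4 : -1 ≤ u.im := by nlinarith [mul_self_nonneg u.re, mul_self_nonneg (u.im + 1)]
  have : u.re = 1 ∧ u.im = 0 := by
    interval_cases h : u.re <;> interval_cases h' : u.im <;> omega
  ext <;> simp [this.1, this.2]

/-- Every ideal of `ℤ[i]` coprime to the ideal `(1+i)` has a unique generator
congruent to `1` modulo `(1+i)³` (a "primary" generator). -/
theorem exists_unique_primary_generator (I : Ideal GaussianInt)
    (h : I ⊔ Ideal.span {(⟨1, 1⟩ : GaussianInt)} = ⊤) :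
    ∃! c : GaussianInt, I = Ideal.span {c} ∧ (⟨1, 1⟩ : GaussianInt) ^ 3 ∣ c - 1 := by
  obtain ⟨g, hg⟩ := (IsPrincipalIdealRing.principal I).principal
  rw [Ideal.submodule_span_eq] at hg
  -- g is not divisible by 1+i
  have hodd : ¬ (⟨1, 1⟩ : GaussianInt) ∣ g := by
    intro hdvd
    have h1 : (1 : GaussianInt) ∈ I ⊔ Ideal.span {(⟨1, 1⟩ : GaussianInt)} := by
      rw [h]; trivial
    rw [Submodule.mem_sup] at h1
    obtain ⟨y, hy, z, hz, hyz⟩ := h1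
    rw [hg, Ideal.mem_span_singleton] at hy
    rw [Ideal.mem_span_singleton] at hz
    have hd1 : (⟨1, 1⟩ : GaussianInt) ∣ 1 := by
      rw [← hyz]
      exact dvd_add (hdvd.trans hy) hz
    rw [gi_one_add_i_dvd] at hd1
    simp [Zsqrtd.re_one, Zsqrtd.im_one] at hd1
  -- helper: span is preserved by unit multiplication
  have Hspan : ∀ u c : GaussianInt, IsUnit u → Ideal.span {c} = Ideal.span {u * c} := by
    intro u c hu
    rw [Ideal.span_singleton_eq_span_singleton]
    exact ⟨hu.unit, by rw [hu.unit_spec, mul_comm]⟩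
  have hodd' : ¬ (2:ℤ) ∣ g.re + g.im := by
    rw [← gi_one_add_i_dvd]; exact hodd
  -- existence
  have hcases : ((4:ℤ) ∣ g.re + g.im - 1 ∧ (4:ℤ) ∣ g.im - g.re + 1) ∨
      ((4:ℤ) ∣ -g.re - g.im - 1 ∧ (4:ℤ) ∣ -g.im + g.re + 1) ∨
      ((4:ℤ) ∣ -g.im + g.re - 1 ∧ (4:ℤ) ∣ g.re + g.im + 1) ∨
      ((4:ℤ) ∣ g.im - g.re - 1 ∧ (4:ℤ) ∣ -g.re - g.im + 1) := by
    omega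
  have hex : ∃ c : GaussianInt, I = Ideal.span {c} ∧ (⟨1, 1⟩ : GaussianInt) ^ 3 ∣ c - 1 := by
    rcases hcases with ⟨h1, h2⟩ | ⟨h1, h2⟩ | ⟨h1, h2⟩ | ⟨h1, h2⟩
    · refine ⟨g, hg, ?_⟩
      rw [gi_pow3_dvd]
      constructor <;> simp only [Zsqrtd.re_sub, Zsqrtd.im_sub, Zsqrtd.re_one, Zsqrtd.im_one] <;>
        omega
    · refine ⟨-g, ?_, ?_⟩
      · rw [hg, show (-g : GaussianInt) = (-1) * g by ring]
        exact Hspan _ _ isUnit_one.neg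
      · rw [gi_pow3_dvd]
        constructor <;>
          simp only [Zsqrtd.re_sub, Zsqrtd.im_sub, Zsqrtd.re_neg, Zsqrtd.im_neg,
            Zsqrtd.re_one, Zsqrtd.im_one] <;> omega
    · have hiunit : IsUnit (⟨0, 1⟩ : GaussianInt) := by
        rw [← Zsqrtd.norm_eq_one_iff' (by norm_num)]
        simp [gi_norm]
      refine ⟨⟨0, 1⟩ * g, ?_, ?_⟩
      · rw [hg]; exact Hspan _ _ hiunit
      · rw [gi_pow3_dvd]
        constructor <;>
          simp only [Zsqrtd.re_sub, Zsqrtd.im_sub, Zsqrtd.re_mul, Zsqrtd.im_mul,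
            Zsqrtd.re_one, Zsqrtd.im_one] <;> ring_nf <;> omega
    · have hiunit : IsUnit (⟨0, -1⟩ : GaussianInt) := by
        rw [← Zsqrtd.norm_eq_one_iff' (by norm_num)]
        simp [gi_norm]
      refine ⟨⟨0, -1⟩ * g, ?_, ?_⟩
      · rw [hg]; exact Hspan _ _ hiunit
      · rw [gi_pow3_dvd]
        constructor <;>
          simp only [Zsqrtd.re_sub, Zsqrtd.im_sub, Zsqrtd.re_mul, Zsqrtd.im_mul,
            Zsqrtd.re_one, Zsqrtd.im_one] <;> ring_nf <;> omega
  obtain ⟨c, hc1, hc2⟩ := hex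
  refine ⟨c, ⟨hc1, hc2⟩, ?_⟩
  rintro c' ⟨hc1', hc2'⟩
  -- c and c' are associated
  have hassoc : Associated c c' := by
    rw [← Ideal.span_singleton_eq_span_singleton, ← hc1, ← hc1']
  obtain ⟨u, hu⟩ := hassoc
  -- 1+i does not divide c
  have hcdvdg : c ∣ g := by
    have : Associated g c := by
      rw [← Ideal.span_singleton_eq_span_singleton, ← hg, ← hc1]
    exact this.symm.dvd
  have hoddc : ¬ (⟨1, 1⟩ : GaussianInt) ∣ c := fun hd => hodd (hd.trans hcdvdg)
  have hcop : IsCoprime ((⟨1, 1⟩ : GaussianInt) ^ 3) c :=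
    (gi_prime_one_add_i.coprime_iff_not_dvd.mpr hoddc).pow_left
  have hdvdu : (⟨1, 1⟩ : GaussianInt) ^ 3 ∣ (u : GaussianInt) - 1 := by
    have hsub : (⟨1, 1⟩ : GaussianInt) ^ 3 ∣ ((u : GaussianInt) - 1) * c := by
      have : ((u : GaussianInt) - 1) * c = (c' - 1) - (c - 1) := by
        rw [← hu]; ring
      rw [this]
      exact dvd_sub hc2' hc2
    exact hcop.dvd_of_dvd_mul_right hsub
  have hu1 : (u : GaussianInt) = 1 := gi_unit_eq_one u.isUnit hdvdu
  rw [← hu, hu1, mul_one]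
end

section
/- Every ideal of ℤ[ω] coprime to the ideal (1−ω) has a unique generator congruent to 1 modulo 3. -/
noncomputable section

open Complex

/-- The primitive cube root of unity `ω = exp(2πi/3)`. -/
def ω : ℂ := Complex.exp (2 * Real.pi * Complex.I / 3)

/-- The ring of Eisenstein integers `ℤ[ω]`, as a subring of `ℂ`. -/
def Eis : Subring ℂ := Subring.closure {ω}

/-- `ω` as an element of `ℤ[ω]`. -/
def ωE : Eis := ⟨ω, Subring.subset_closure rfl⟩

lemma ω_eq : ω = Complex.exp (((2 * Real.pi / 3 : ℝ) : ℂ) * Complex.I) := by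
  unfold ω; congr 1; push_cast; ring

lemma ω_re : ω.re = -(1/2) := by
  rw [ω_eq, Complex.exp_ofReal_mul_I_re]
  have : 2 * Real.pi / 3 = Real.pi - Real.pi / 3 := by ring
  rw [this, Real.cos_pi_sub, Real.cos_pi_div_three]

lemma ω_im : ω.im = Real.sqrt 3 / 2 := by
  rw [ω_eq, Complex.exp_ofReal_mul_I_im]
  have : 2 * Real.pi / 3 = Real.pi - Real.pi / 3 := by ring
  rw [this, Real.sin_pi_sub, Real.sin_pi_div_three]

lemma ω_sq : ω ^ 2 = -1 - ω := by
  have h3 : Real.sqrt 3 ^ 2 = 3 := Real.sq_sqrt (by norm_num)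
  apply Complex.ext
  · simp [pow_two, Complex.mul_re, ω_re, ω_im]
    nlinarith [h3]
  · simp [pow_two, Complex.mul_im, ω_re, ω_im]
    ring

lemma ω_cube : ω ^ 3 = 1 := by linear_combination (ω - 1) * ω_sq

def S : Subring ℂ where
  carrier := {z | ∃ m n : ℤ, z = m + n * ω}
  zero_mem' := ⟨0, 0, by push_cast; ring⟩
  one_mem' := ⟨1, 0, by push_cast; ring⟩
  add_mem' := by
    rintro a b ⟨m, n, rfl⟩ ⟨p, q, rfl⟩
    exact ⟨m + p, n + q, by push_cast; ring⟩
  neg_mem' := by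
    rintro a ⟨m, n, rfl⟩
    exact ⟨-m, -n, by push_cast; ring⟩
  mul_mem' := by
    rintro a b ⟨m, n, rfl⟩ ⟨p, q, rfl⟩
    exact ⟨m * p - n * q, m * q + n * p - n * q, by push_cast; linear_combination (n : ℂ) * q * ω_sq⟩

lemma Eis_eq : Eis = S := by
  apply le_antisymm
  · exact Subring.closure_le.mpr (by rintro x rfl; exact ⟨0, 1, by push_cast; ring⟩)
  · rintro z ⟨m, n, rfl⟩
    have hω : ω ∈ Eis := Subring.subset_closure rfl
    exact add_mem (intCast_mem Eis m) (mul_mem (intCast_mem Eis n) hω)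

lemma mem_Eis (m n : ℤ) : (m : ℂ) + n * ω ∈ Eis := by rw [Eis_eq]; exact ⟨m, n, rfl⟩

def mkE (m n : ℤ) : Eis := ⟨(m : ℂ) + n * ω, mem_Eis m n⟩

lemma exists_coords (x : Eis) : ∃ m n : ℤ, x = mkE m n := by
  have hx : (x : ℂ) ∈ S := by rw [← Eis_eq]; exact x.2
  obtain ⟨m, n, h⟩ := hx
  exact ⟨m, n, Subtype.ext h⟩

lemma coords_inj {m n m' n' : ℤ} (h : (m : ℂ) + n * ω = m' + n' * ω) : m = m' ∧ n = n' := by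
  have h3 : Real.sqrt 3 ≠ 0 := ne_of_gt (Real.sqrt_pos.mpr (by norm_num))
  have him := congrArg Complex.im h
  simp [ω_im, h3] at him
  subst him
  have hre := congrArg Complex.re h
  simp [ω_re] at hre
  exact ⟨hre, rfl⟩

lemma normSq_coords (m n : ℤ) : Complex.normSq ((m : ℂ) + n * ω) = ((m^2 - m*n + n^2 : ℤ) : ℝ) := by
  have h3 : Real.sqrt 3 ^ 2 = 3 := Real.sq_sqrt (by norm_num)
  simp [Complex.normSq_apply, Complex.add_re, Complex.add_im, Complex.mul_re, Complex.mul_im,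
    ω_re, ω_im]
  push_cast
  nlinarith [h3]

lemma normSq_nat (x : Eis) : ∃ k : ℕ, Complex.normSq (x : ℂ) = k ∧ (k = 0 ↔ x = 0) := by
  obtain ⟨m, n, rfl⟩ := exists_coords x
  have key : 0 ≤ m^2 - m*n + n^2 := by nlinarith [sq_nonneg (2*m - n), sq_nonneg n]
  refine ⟨(m^2 - m*n + n^2).toNat, ?_, ?_⟩
  · show Complex.normSq ((m:ℂ) + n * ω) = _
    rw [normSq_coords]; congr 1; omega
  · constructor
    · intro hk
      have h0 : m = 0 ∧ n = 0 := by
        have : m^2 - m*n + n^2 = 0 := by omega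
        constructor <;> nlinarith [sq_nonneg (2*m - n), sq_nonneg (m - 2*n), sq_nonneg n, sq_nonneg m]
      apply Subtype.ext
      simp [mkE, h0.1, h0.2]
    · intro hx
      have : (m : ℂ) + n * ω = 0 := congrArg Subtype.val hx
      have h00 : m = 0 ∧ n = 0 := by
        have := coords_inj (m' := 0) (n' := 0) (by push_cast; simpa using this)
        simpa using this
      simp [h00.1, h00.2]

lemma exists_close (z : ℂ) : ∃ q : Eis, Complex.normSq (z - q) < 1 := by
  have h3 : Real.sqrt 3 ^ 2 = 3 := Real.sq_sqrt (by norm_num)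
  have h3pos : (0:ℝ) < Real.sqrt 3 := Real.sqrt_pos.mpr (by norm_num)
  set n : ℤ := round (z.im * 2 / Real.sqrt 3) with hn
  set m : ℤ := round (z.re + n / 2) with hm
  refine ⟨mkE m n, ?_⟩
  have hre : (z - mkE m n).re = (z.re + n/2) - m := by
    simp [mkE, Complex.sub_re, Complex.add_re, Complex.mul_re, ω_re, ω_im]
    ring
  have him : (z - mkE m n).im = (z.im * 2 / Real.sqrt 3 - n) * (Real.sqrt 3 / 2) := by
    simp [mkE, Complex.sub_im, Complex.add_im, Complex.mul_im, ω_re, ω_im]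
    field_simp
  have b1 : |(z.re + n/2) - m| ≤ 1/2 := abs_sub_round _
  have b2 : |z.im * 2 / Real.sqrt 3 - n| ≤ 1/2 := abs_sub_round _
  rw [Complex.normSq_apply, hre, him]
  have s1 : ((z.re + n/2) - m)^2 ≤ (1/2)^2 := by
    rw [← _root_.sq_abs]; exact pow_le_pow_left₀ (abs_nonneg _) b1 2
  have s2 : (z.im * 2 / Real.sqrt 3 - n)^2 ≤ (1/2)^2 := by
    rw [← _root_.sq_abs]; exact pow_le_pow_left₀ (abs_nonneg _) b2 2
  nlinarith [h3, s1, s2, sq_nonneg (z.im * 2 / Real.sqrt 3 - n)]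

lemma coe_ne_zero {x : Eis} (hx : x ≠ 0) : (x : ℂ) ≠ 0 :=
  fun h => hx (Subtype.ext h)

lemma principal (I : Ideal Eis) (hI : ∃ x ∈ I, x ≠ 0) :
    ∃ a : Eis, a ≠ 0 ∧ a ∈ I ∧ I = Ideal.span {a} := by
  classical
  obtain ⟨x, hxI, hx0⟩ := hI
  obtain ⟨k, hk, hk0⟩ := normSq_nat x
  have hP : ∃ j : ℕ, ∃ y ∈ I, y ≠ 0 ∧ Complex.normSq (y : ℂ) = j := ⟨k, x, hxI, hx0, hk⟩
  set k₀ := Nat.find hP with hk₀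
  obtain ⟨a, haI, ha0, haN⟩ := Nat.find_spec hP
  refine ⟨a, ha0, haI, ?_⟩
  apply le_antisymm
  · intro b hbI
    obtain ⟨q, hq⟩ := exists_close ((b : ℂ) / (a : ℂ))
    have haC : (a : ℂ) ≠ 0 := coe_ne_zero ha0
    have hrI : b - q * a ∈ I := I.sub_mem hbI (I.mul_mem_left q haI)
    have hval : ((b - q * a : Eis) : ℂ) = ((b : ℂ) / a - q) * a := by
      push_cast
      field_simp
    have hlt : Complex.normSq ((b - q * a : Eis) : ℂ) < k₀ := by
      rw [hval, Complex.normSq_mul, ← haN]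
      have hpos : 0 < Complex.normSq (a : ℂ) := Complex.normSq_pos.mpr haC
      nlinarith [hq, hpos]
    have hr0 : b - q * a = 0 := by
      by_contra hne
      obtain ⟨j, hj, hj0⟩ := normSq_nat (b - q * a)
      have hjlt : j < k₀ := by
        rw [hj] at hlt
        exact_mod_cast hlt
      exact Nat.find_min hP hjlt ⟨b - q * a, hrI, hne, hj⟩
    have : b = q * a := by
      have := sub_eq_zero.mp hr0
      linear_combination this
    exact Ideal.mem_span_singleton.mpr ⟨q, by rw [this, mul_comm]⟩
  · rw [Ideal.span_le, Set.singleton_subset_iff]; exact haI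

lemma unit_eq_one {u : Eis} (hu : IsUnit u) (hd : (3 : Eis) ∣ u - 1) : u = 1 := by
  obtain ⟨v, hv⟩ := hu.exists_right_inv
  obtain ⟨j, hj, hj0⟩ := normSq_nat u
  obtain ⟨k, hk, hk0⟩ := normSq_nat v
  have hjk : (j : ℝ) * k = 1 := by
    rw [← hj, ← hk, ← Complex.normSq_mul]
    have : (u : ℂ) * v = 1 := by
      have := congrArg (Subtype.val) hv
      push_cast at this
      exact this
    rw [this]; simp
  have hj1 : j = 1 := by
    have : j * k = 1 := by exact_mod_cast hjk
    exact Nat.eq_one_of_mul_eq_one_right (by rwa [mul_comm] at this)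
  obtain ⟨t, ht⟩ := hd
  obtain ⟨l, hl, hl0⟩ := normSq_nat t
  -- normSq (u - 1) = 9 * normSq t, and normSq (u - 1) ≤ 4
  have habs : ‖(u : ℂ)‖ = 1 := by
    have := Complex.sq_norm (u : ℂ)
    rw [hj, hj1] at this
    push_cast at this
    nlinarith [norm_nonneg (u : ℂ), this]
  have hle : Complex.normSq ((u - 1 : Eis) : ℂ) ≤ 4 := by
    have h1 : ‖(u : ℂ) - 1‖ ≤ 2 := by
      calc ‖(u : ℂ) - 1‖ ≤ ‖(u : ℂ)‖ + ‖(1 : ℂ)‖ :=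
            by exact norm_sub_le _ _
        _ = 2 := by rw [habs]; norm_num
    have h2 : Complex.normSq ((u - 1 : Eis) : ℂ) = ‖(u : ℂ) - 1‖ ^ 2 := by
      rw [Complex.sq_norm]; push_cast; ring_nf
    rw [h2]
    nlinarith [norm_nonneg ((u : ℂ) - 1)]
  have h9 : Complex.normSq ((u - 1 : Eis) : ℂ) = 9 * l := by
    have : ((u - 1 : Eis) : ℂ) = 3 * (t : ℂ) := by
      have h' := congrArg (Subtype.val) ht
      have h3 : ((3 : Eis) : ℂ) = 3 := by norm_cast
      push_cast at h' ⊢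
      rw [h', h3]
    rw [this, Complex.normSq_mul, hl]
    norm_num
  have hl00 : l = 0 := by
    rw [h9] at hle
    by_contra hne
    have : 1 ≤ l := Nat.one_le_iff_ne_zero.mpr hne
    have : (1 : ℝ) ≤ l := by exact_mod_cast this
    nlinarith
  have ht0 : t = 0 := hl0.mp hl00
  have : u - 1 = 0 := by rw [ht, ht0, mul_zero]
  linear_combination this

lemma coe_ωE : ((ωE : Eis) : ℂ) = ω := rfl
lemma coe_three : ((3 : Eis) : ℂ) = 3 := by norm_cast

lemma eisq : ((1 - ωE : Eis) : ℂ) = 1 - ω := by push_cast [coe_ωE]; ring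

lemma coe_two : ((2 : Eis) : ℂ) = 2 := by norm_cast

lemma hsq : (1 - ωE)^2 = -(3 * ωE) := by
  apply Subtype.ext
  push_cast [coe_ωE, coe_three]
  linear_combination ω_sq

lemma three_factor : (3 : Eis) = (1 - ωE) * (2 + ωE) := by
  apply Subtype.ext
  push_cast [coe_ωE, coe_three, coe_two]
  linear_combination ω_sq

lemma cube_unit : ωE * (ωE * ωE) = 1 := by
  apply Subtype.ext
  push_cast [coe_ωE]
  linear_combination (ω - 1) * ω_sq

lemma isUnit_ωE : IsUnit ωE := IsUnit.of_mul_eq_one _ cube_unit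
lemma isUnit_ω2 : IsUnit (ωE * ωE) := IsUnit.of_mul_eq_one ωE (by linear_combination cube_unit)

lemma dvd_of_coords {x : Eis} {m n : ℤ} (h : (x : ℂ) = m + n * ω)
    (hm : 3 ∣ m) (hn : 3 ∣ n) : (3 : Eis) ∣ x := by
  obtain ⟨p, rfl⟩ := hm
  obtain ⟨q, rfl⟩ := hn
  refine ⟨mkE p q, Subtype.ext ?_⟩
  push_cast [coe_three, mkE] at h ⊢
  rw [h]; ring

lemma coords_of_dvd {m n : ℤ} (h : (3 : Eis) ∣ mkE m n) : 3 ∣ m ∧ 3 ∣ n := by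
  obtain ⟨t, ht⟩ := h
  obtain ⟨p, q, rfl⟩ := exists_coords t
  have hv := congrArg Subtype.val ht
  push_cast [coe_three, mkE] at hv
  have : (m : ℂ) + n * ω = (3*p : ℤ) + (3*q : ℤ) * ω := by push_cast; rw [hv]; ring
  obtain ⟨h1, h2⟩ := coords_inj this
  exact ⟨⟨p, h1⟩, ⟨q, h2⟩⟩

lemma one_sub_not_dvd : ¬ (1 - ωE) ∣ (1 : Eis) := by
  rintro ⟨v, hv⟩
  obtain ⟨k, hk, hk0⟩ := normSq_nat v
  have h3 : Complex.normSq ((1 - ωE : Eis) : ℂ) = 3 := by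
    rw [eisq]
    have : (1 : ℂ) - ω = ((1 : ℤ) : ℂ) + (-1 : ℤ) * ω := by push_cast; ring
    rw [this, normSq_coords]; norm_num
  have hv' : (1 : ℝ) = 3 * k := by
    have hmul : (((1 - ωE) * v : Eis) : ℂ) = ((1 - ωE : Eis) : ℂ) * v := by push_cast; ring
    have := congrArg (fun x : Eis => Complex.normSq (x : ℂ)) hv
    simp only [hmul, Complex.normSq_mul, h3, hk] at this
    simpa using this
  rcases Nat.eq_zero_or_pos k with h0 | hpos
  · rw [h0] at hv'; norm_num at hv'
  · have : (1 : ℝ) ≤ k := by exact_mod_cast hpos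
    nlinarith

/-- Every ideal of `ℤ[ω]` coprime to the ideal `(1−ω)` has a unique generator
congruent to `1` modulo `3` (a "primary" generator). -/
theorem eisenstein_exists_unique_primary_generator (I : Ideal Eis)
    (h : I ⊔ Ideal.span {1 - ωE} = ⊤) :
    ∃! c : Eis, I = Ideal.span {c} ∧ (3 : Eis) ∣ c - 1 := by
  classical
  have h1 : (1 : Eis) ∈ I ⊔ Ideal.span {1 - ωE} := h ▸ Submodule.mem_top
  obtain ⟨i, hiI, j, hj, hij⟩ := Submodule.mem_sup.mp h1
  obtain ⟨y, hy⟩ := Ideal.mem_span_singleton'.mp hj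
  have hIne : ∃ x ∈ I, x ≠ 0 := by
    refine ⟨i, hiI, ?_⟩
    rintro rfl
    exact one_sub_not_dvd ⟨y, by linear_combination -hij - hy⟩
  obtain ⟨a, ha0, haI, haspan⟩ := principal I hIne
  have inv3 : ∀ c : Eis, I = Ideal.span {c} → ∃ s u, c * s - 1 = 3 * u := by
    intro c hc
    have hic : i ∈ Ideal.span {c} := hc ▸ hiI
    obtain ⟨t, ht⟩ := Ideal.mem_span_singleton'.mp hic
    refine ⟨2*t - t^2*c, ωE * y^2, ?_⟩
    have h1' : t * c + y * (1 - ωE) = 1 := by rw [ht, hy]; exact hij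
    linear_combination (1 - t*c + y*(1 - ωE)) * h1' - y^2 * hsq
  obtain ⟨m, n, rfl⟩ := exists_coords a
  obtain ⟨s, w, hsw⟩ := inv3 (mkE m n) haspan
  have h3mn : ¬ (3 : ℤ) ∣ (m + n) := by
    rintro ⟨v, hv⟩
    apply one_sub_not_dvd
    have hvC : (m : ℂ) + n = 3 * v := by exact_mod_cast congrArg (fun z : ℤ => (z : ℂ)) hv
    have hfac : mkE m n = (1 - ωE) * ((2 + ωE) * (v : ℤ) - (n : ℤ)) := by
      apply Subtype.ext
      push_cast [coe_ωE, coe_two, mkE]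
      linear_combination hvC + (v : ℂ) * ω_sq
    have d3 : (1 - ωE) ∣ (3 : Eis) := ⟨2 + ωE, three_factor⟩
    have d1 : (1 - ωE) ∣ mkE m n * s := Dvd.dvd.mul_right ⟨_, hfac⟩ s
    have d2 : (1 - ωE) ∣ mkE m n * s - 1 := d3.trans ⟨w, hsw⟩
    have := dvd_sub d1 d2
    simpa using this
  have mkcase : ∀ (u : Eis), IsUnit u → ∀ p q : ℤ, ((u * mkE m n : Eis) : ℂ) = p + q * ω →
      (3 : ℤ) ∣ p - 1 → (3 : ℤ) ∣ q → ∃ c, I = Ideal.span {c} ∧ (3 : Eis) ∣ c - 1 := by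
    intro u hu p q hcoe hp hq
    refine ⟨u * mkE m n, ?_, ?_⟩
    · rw [haspan]
      apply (Ideal.span_singleton_eq_span_singleton).mpr
      obtain ⟨U, hU⟩ := hu
      exact ⟨U, by rw [hU, mul_comm]⟩
    · refine dvd_of_coords (x := u * mkE m n - 1) (m := p - 1) (n := q) ?_ hp hq
      have hcoe' : (u : ℂ) * (mkE m n : ℂ) = p + q * ω := by push_cast at hcoe; exact hcoe
      push_cast
      rw [hcoe']
      push_cast
      ring
  have hex : ∃ c, I = Ideal.span {c} ∧ (3 : Eis) ∣ c - 1 := by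
    have hm : m % 3 = 0 ∨ m % 3 = 1 ∨ m % 3 = 2 := by omega
    have hn : n % 3 = 0 ∨ n % 3 = 1 ∨ n % 3 = 2 := by omega
    rcases hm with hm | hm | hm <;> rcases hn with hn | hn | hn
    · exact absurd (by omega) h3mn
    · exact mkcase (ωE * ωE) isUnit_ω2 (n - m) (-m)
        (by push_cast [coe_ωE, mkE]; linear_combination ((m : ℂ) + n * (ω - 1)) * ω_sq)
        (by omega) (by omega)
    · exact mkcase (-(ωE * ωE)) isUnit_ω2.neg (m - n) m
        (by push_cast [coe_ωE, mkE]; linear_combination (-(m : ℂ) - n * (ω - 1)) * ω_sq)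
        (by omega) (by omega)
    · exact mkcase 1 isUnit_one m n (by push_cast [mkE]; ring) (by omega) (by omega)
    · exact mkcase (-ωE) isUnit_ωE.neg n (n - m)
        (by push_cast [coe_ωE, mkE]; linear_combination (-(n : ℂ)) * ω_sq)
        (by omega) (by omega)
    · exact absurd (by omega) h3mn
    · exact mkcase (-1) (isUnit_one.neg) (-m) (-n) (by push_cast [mkE]; ring)
        (by omega) (by omega)
    · exact absurd (by omega) h3mn
    · exact mkcase ωE isUnit_ωE (-n) (m - n)
        (by push_cast [coe_ωE, mkE]; linear_combination (n : ℂ) * ω_sq)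
        (by omega) (by omega)
  obtain ⟨c, hcspan, hcdvd⟩ := hex
  refine ⟨c, ⟨hcspan, hcdvd⟩, ?_⟩
  rintro c' ⟨hc'span, hc'dvd⟩
  obtain ⟨s₁, w₁, hw₁⟩ := inv3 c hcspan
  have hspans : Ideal.span {c} = Ideal.span {c'} := by rw [← hcspan, hc'span]
  obtain ⟨U, hU⟩ := (Ideal.span_singleton_eq_span_singleton).mp hspans
  obtain ⟨d, hdd⟩ := dvd_sub hc'dvd hcdvd
  have hdd' : c' - c = 3 * d := by linear_combination hdd
  have hU3 : (3 : Eis) ∣ (U : Eis) - 1 :=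
    ⟨s₁ * d - w₁ * ((U : Eis) - 1), by
      linear_combination (-((U : Eis) - 1)) * hw₁ + s₁ * hdd' + s₁ * hU⟩
  have hU1 : (U : Eis) = 1 := unit_eq_one U.isUnit hU3
  rw [← hU, hU1, mul_one]
end
end
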